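/- An inert subring of a unique factorization domain is itself a unique factorization domain. -/

import Mathlib

/-- A derivation is *locally nilpotent* if every element is killed by some iterate. -/
def IsLND {k B : Type*} [CommRing k] [CommRing B] [Algebra k B]
    (D : Derivation k B B) : Prop :=
  ∀ b : B, ∃ n : ℕ, (D.toLinearMap ^ n) b = 0

/-- A derivation *has a slice* if `1` is in its image. -/
def HasSlice {k B : Type*} [CommRing k] [CommRing B] [Algebra k B]
    (D : Derivation k B B) : Prop :=
  ∃ s : B, D s = 1

/-- The kernel of a derivation, as a subalgebra. -/
def lndKer {k B : Type*} [CommRing k] [CommRing B] [Algebra k B]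
    (D : Derivation k B B) : Subalgebra k B where
  carrier := {b | D b = 0}
  mul_mem' := by
    intro a b ha hb
    simp only [Set.mem_setOf_eq] at *
    simp [D.leibniz, ha, hb]
  add_mem' := by
    intro a b ha hb
    simp only [Set.mem_setOf_eq] at *
    simp [ha, hb]
  algebraMap_mem' := fun r => D.map_algebraMap r

/-- The Makar-Limanov invariant: intersection of the kernels of all locally
nilpotent derivations. -/
def ML (k : Type*) {B : Type*} [CommRing k] [CommRing B] [Algebra k B] : Subalgebra k B :=
  ⨅ D ∈ {D : Derivation k B B | IsLND D}, lndKer D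

/-- The Makar-Limanov–Freudenburg invariant: intersection of the kernels of all locally
nilpotent derivations admitting a slice (equal to `⊤ = B` if none exist). -/
def MLstar (k : Type*) {B : Type*} [CommRing k] [CommRing B] [Algebra k B] : Subalgebra k B :=
  ⨅ D ∈ {D : Derivation k B B | IsLND D ∧ HasSlice D}, lndKer D

/-- A `k`-algebra is *rigid* if it admits no nonzero locally nilpotent derivation. -/
def IsRigid (k B : Type*) [CommRing k] [CommRing B] [Algebra k B] : Prop :=
  ∀ D : Derivation k B B, IsLND D → D = 0

/-- The extension `A ⊆ B` has transcendence degree `n`. -/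
def TrdegEq (A B : Type*) [CommRing A] [CommRing B] [Algebra A B] (n : ℕ) : Prop :=
  (∃ x : Fin n → B, AlgebraicIndependent A x) ∧
    ∀ x : Fin (n + 1) → B, ¬ AlgebraicIndependent A x

/-- A subring `A` of a domain `B` is *inert* if `f * g ∈ A` for nonzero `f, g`
implies `f ∈ A` and `g ∈ A`. -/
def IsInert {B : Type*} [CommRing B] (A : Subring B) : Prop :=
  ∀ f g : B, f ≠ 0 → g ≠ 0 → f * g ∈ A → f ∈ A ∧ g ∈ A

section Aux
set_option linter.unusedSectionVars false

variable {B : Type*} [CommRing B] [IsDomain B] {A : Subring B}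

lemma inert_isUnit (hA : IsInert A) {x : A} (h : IsUnit (x : B)) : IsUnit x := by
  obtain ⟨u, hu⟩ := h
  have hx : (x : B) ≠ 0 := by
    intro h0; rw [h0] at hu; exact u.ne_zero hu
  have hy : ((u⁻¹ : Bˣ) : B) ≠ 0 := Units.ne_zero _
  have hmul : (x : B) * ((u⁻¹ : Bˣ) : B) = 1 := by rw [← hu]; exact u.mul_inv
  have hmem : ((x : B) * ((u⁻¹ : Bˣ) : B)) ∈ A := by rw [hmul]; exact A.one_mem
  obtain ⟨-, hmem2⟩ := hA _ _ hx hy hmem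
  exact IsUnit.of_mul_eq_one (a := x) ⟨_, hmem2⟩ (Subtype.ext (by simpa using hmul))

lemma inert_dvd (hA : IsInert A) {x b : A} (h : (x : B) ∣ (b : B)) (hx : (x : B) ≠ 0) :
    x ∣ b := by
  obtain ⟨c, hc⟩ := h
  by_cases hb : (b : B) = 0
  · have : b = 0 := Subtype.ext hb
    simp [this]
  · have hcz : c ≠ 0 := by rintro rfl; exact hb (by simpa using hc)
    have : (x : B) * c ∈ A := by rw [← hc]; exact b.2
    obtain ⟨-, hcmem⟩ := hA _ _ hx hcz this
    exact ⟨⟨c, hcmem⟩, Subtype.ext hc⟩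

lemma inert_dvdNotUnit (hA : IsInert A) {a b : A} (h : DvdNotUnit a b) :
    DvdNotUnit (a : B) (b : B) := by
  obtain ⟨ha, x, hx, hb⟩ := h
  refine ⟨fun h0 => ha (Subtype.ext h0), x, ?_, by rw [hb, Subring.coe_mul]⟩
  intro hux
  exact hx (inert_isUnit hA hux)

lemma inert_irreducible (hA : IsInert A) {p : A} (h : Irreducible p) : Irreducible (p : B) := by
  have hp0 : (p : B) ≠ 0 := by
    intro h0
    exact h.ne_zero (Subtype.ext h0)
  refine ⟨fun hu => h.not_isUnit (inert_isUnit hA hu), ?_⟩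
  intro f g hfg
  have hf : f ≠ 0 := by rintro rfl; exact hp0 (by simpa using hfg)
  have hg : g ≠ 0 := by rintro rfl; exact hp0 (by simpa using hfg)
  have hm : f * g ∈ A := by rw [← hfg]; exact p.2
  obtain ⟨hfm, hgm⟩ := hA _ _ hf hg hm
  rcases h.isUnit_or_isUnit (Subtype.ext hfg : p = ⟨f, hfm⟩ * ⟨g, hgm⟩) with h' | h'
  · exact Or.inl (h'.map A.subtype)
  · exact Or.inr (h'.map A.subtype)

end Aux

/-- An inert subring of a UFD is a UFD. -/
theorem stmt_1 {B : Type*} [CommRing B] [IsDomain B] [UniqueFactorizationMonoid B]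
    (A : Subring B) (hA : IsInert A) :
    UniqueFactorizationMonoid A := by
  have wf : WfDvdMonoid A := by
    refine ⟨?_⟩
    exact Subrelation.wf (fun {a b} h => inert_dvdNotUnit hA h)
      (InvImage.wf (fun a : A => (a : B))
        (IsWellFounded.wf (r := (DvdNotUnit : B → B → Prop))))
  exact { wf with
    irreducible_iff_prime := by
      intro p
      constructor
      · intro hp
        have hprime : Prime (p : B) := (inert_irreducible hA hp).prime
        refine ⟨hp.ne_zero, hp.not_isUnit, ?_⟩
        intro a b hab
        have : (p : B) ∣ (a : B) * (b : B) := by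
          obtain ⟨c, hc⟩ := hab
          exact ⟨c, by rw [Subtype.ext_iff, Subring.coe_mul, Subring.coe_mul] at hc; exact hc⟩
        rcases hprime.2.2 _ _ this with h | h
        · exact Or.inl (inert_dvd hA h hprime.ne_zero)
        · exact Or.inr (inert_dvd hA h hprime.ne_zero)
      · exact Prime.irreducible }
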